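/- Fix a finite alphabet 𝒳 with |𝒳| ≥ 2 and model each Ising channel use with input x and state σ, driven by a noise bit b ∈ {0,1}, as producing output y = x if b = 0 and y = σ if b = 1, with new state x. Define the full encoder and decoder of the paper's scheme recursively over a message sequence ν₁, …, ν_n ∈ 𝒳ⁿ: the first symbol ν₁ is transmitted twice and decoded as the second output; thereafter each symbol is handled by the per-symbol rule (repeat twice if equal to the previous symbol; otherwise send once and resend only if the feedback output differs from the symbol), and the decoder decodes a received output y immediately if y differs from the previously decoded symbol, and otherwise decodes the subsequent output. Then for every message sequence ν₁, …, ν_n and every sequence of noise bits, the decoder's output sequence equals ν₁, …, ν_n exactly (the scheme is zero-error). -/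
import Mathlib


/-- One use of the (noise-bit driven) Ising channel: with input `x`, state `σ`
and noise bit `b`, the output is `x` if `b = false` (i.e. `b = 0`) and `σ` if
`b = true` (i.e. `b = 1`); the new state is the input `x`. -/
def isingOut {𝒳 : Type} (x σ : 𝒳) (b : Bool) : 𝒳 :=
  if b = false then x else σ

/-- Encoder for the tail of the message (all symbols after the first): given
the current channel state `σ` (the previously transmitted symbol), the list of
remaining message symbols, the noise-bit stream `b` and the current time `t`,
it produces the stream of channel outputs. A symbol equal to the previous one
is transmitted twice; otherwise it is transmitted once and retransmitted only
if the feedback output differs from it. Each channel use updates the state to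
its input. -/
def encodeTail {𝒳 : Type} [DecidableEq 𝒳] (σ : 𝒳) :
    List 𝒳 → (ℕ → Bool) → ℕ → List 𝒳
  | [], _, _ => []
  | ν :: rest, b, t =>
    if ν = σ then
      isingOut ν σ (b t) :: isingOut ν ν (b (t + 1)) ::
        encodeTail ν rest b (t + 2)
    else if isingOut ν σ (b t) = ν then
      isingOut ν σ (b t) :: encodeTail ν rest b (t + 1)
    else
      isingOut ν σ (b t) :: isingOut ν ν (b (t + 1)) ::
        encodeTail ν rest b (t + 2)

/-- Full encoder: from initial channel state `s₀`, the first symbol `ν₁` is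
transmitted twice (after the first use the state is `ν₁`), and the remaining
symbols are handled by `encodeTail`. -/
def encode {𝒳 : Type} [DecidableEq 𝒳] (s₀ : 𝒳) :
    List 𝒳 → (ℕ → Bool) → List 𝒳
  | [], _ => []
  | ν :: rest, b =>
      isingOut ν s₀ (b 0) :: isingOut ν ν (b 1) :: encodeTail ν rest b 2

/-- Decoder for the outputs following the first decoded symbol: `prev` is the
previously decoded symbol; a received output `y` is decoded immediately if
`y ≠ prev`, and otherwise the subsequent output is decoded. -/
def decodeTail {𝒳 : Type} [DecidableEq 𝒳] (prev : 𝒳) : List 𝒳 → List 𝒳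
  | [] => []
  | y :: ys =>
    if y ≠ prev then y :: decodeTail y ys
    else
      match ys with
      | [] => []
      | y' :: ys' => y' :: decodeTail y' ys'

/-- Full decoder: the first symbol is decoded as the second received output,
and the remaining outputs are decoded by `decodeTail`. -/
def decode {𝒳 : Type} [DecidableEq 𝒳] : List 𝒳 → List 𝒳
  | [] => []
  | [_] => []
  | _ :: y₂ :: ys => y₂ :: decodeTail y₂ ys

theorem decodeTail_encodeTail {𝒳 : Type} [DecidableEq 𝒳] :
    ∀ (rest : List 𝒳) (σ : 𝒳) (b : ℕ → Bool) (t : ℕ),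
      decodeTail σ (encodeTail σ rest b t) = rest
  | [], _, _, _ => rfl
  | ν :: rest, σ, b, t => by
    by_cases h : ν = σ
    · subst h
      cases hb : b t <;> cases hb' : b (t+1) <;>
        simp [encodeTail, decodeTail, isingOut, hb, hb',
          decodeTail_encodeTail rest ν b (t+2)]
    · cases hb : b t
      · simp only [encodeTail, isingOut, hb, h, if_true, if_false, ite_false,
          ite_true, if_pos, reduceIte]
        rw [decodeTail.eq_def]
        simp [h, decodeTail_encodeTail rest ν b (t+1)]
      · cases hb' : b (t+1) <;>
          simp [encodeTail, decodeTail, isingOut, hb, hb', h, Ne.symm h,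
            decodeTail_encodeTail rest ν b (t+2)]

/-- Zero-error property of the coding scheme: for every message sequence and
every sequence of noise bits, the decoded sequence equals the message. -/
theorem stmt11 (𝒳 : Type) [DecidableEq 𝒳] [Fintype 𝒳]
    (hcard : 2 ≤ Fintype.card 𝒳) (s₀ : 𝒳) (ν : List 𝒳) (b : ℕ → Bool) :
    decode (encode s₀ ν b) = ν := by
  cases ν with
  | nil => rfl
  | cons ν₁ rest =>
    have h2 : isingOut ν₁ ν₁ (b 1) = ν₁ := by cases b 1 <;> rfl
    simp [encode, decode, h2, decodeTail_encodeTail rest ν₁ b 2]
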